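/- The general shuffle relation holds: for positive integer multi-indices (a₁,…,aₙ) and (b₁,…,bₘ) and all N ≥ 1, S_{a₁,…,aₙ}(N)·S_{b₁,…,bₘ}(N) = ∑_{ℓ=1}^N ℓ^(-a₁) S_{a₂,…,aₙ}(ℓ) S_{b₁,…,bₘ}(ℓ) + ∑_{ℓ=1}^N ℓ^(-b₁) S_{a₁,…,aₙ}(ℓ) S_{b₂,…,bₘ}(ℓ) - ∑_{ℓ=1}^N ℓ^(-(a₁+b₁)) S_{a₂,…,aₙ}(ℓ) S_{b₂,…,bₘ}(ℓ). -/

import Mathlib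

/-- Nested harmonic sums `S_{a₁,…,a_r}(N)` with positive integer indices. -/
noncomputable def S : List ℕ → ℕ → ℝ
  | [], _ => 1
  | a :: l, N => ∑ n ∈ Finset.Icc 1 N, (1 / (n : ℝ) ^ a) * S l n

lemma shuffle_aux (f g : ℕ → ℝ) (N : ℕ) :
    (∑ l ∈ Finset.Icc 1 N, f l) * (∑ l ∈ Finset.Icc 1 N, g l)
      = (∑ l ∈ Finset.Icc 1 N, f l * (∑ k ∈ Finset.Icc 1 l, g k))
        + (∑ l ∈ Finset.Icc 1 N, (∑ k ∈ Finset.Icc 1 l, f k) * g l)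
        - ∑ l ∈ Finset.Icc 1 N, f l * g l := by
  induction N with
  | zero => simp
  | succ n ih =>
    rw [Finset.sum_Icc_succ_top (by omega : 1 ≤ n + 1),
        Finset.sum_Icc_succ_top (by omega : 1 ≤ n + 1),
        Finset.sum_Icc_succ_top (by omega : 1 ≤ n + 1),
        Finset.sum_Icc_succ_top (by omega : 1 ≤ n + 1),
        Finset.sum_Icc_succ_top (by omega : 1 ≤ n + 1)]
    rw [Finset.sum_Icc_succ_top (by omega : 1 ≤ n + 1),
        Finset.sum_Icc_succ_top (by omega : 1 ≤ n + 1)]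
    ring_nf
    ring_nf at ih
    linarith [ih]

/-- General shuffle relation for nested harmonic sums. -/
theorem stmt_5 (a b : ℕ) (as bs : List ℕ) (N : ℕ)
    (ha : 1 ≤ a) (hb : 1 ≤ b)
    (has : ∀ i ∈ as, 1 ≤ i) (hbs : ∀ i ∈ bs, 1 ≤ i) (hN : 1 ≤ N) :
    S (a :: as) N * S (b :: bs) N
      = (∑ l ∈ Finset.Icc 1 N, (1 / (l : ℝ) ^ a) * S as l * S (b :: bs) l)
        + (∑ l ∈ Finset.Icc 1 N, (1 / (l : ℝ) ^ b) * S (a :: as) l * S bs l)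
        - ∑ l ∈ Finset.Icc 1 N, (1 / (l : ℝ) ^ (a + b)) * S as l * S bs l := by
  have h := shuffle_aux (fun l : ℕ => (1 / (l : ℝ) ^ a) * S as l)
      (fun l : ℕ => (1 / (l : ℝ) ^ b) * S bs l) N
  have e1 : (∑ l ∈ Finset.Icc 1 N, (fun l : ℕ => (1 / (l : ℝ) ^ a) * S as l) l
      * (∑ k ∈ Finset.Icc 1 l, (fun l : ℕ => (1 / (l : ℝ) ^ b) * S bs l) k))
      = ∑ l ∈ Finset.Icc 1 N, (1 / (l : ℝ) ^ a) * S as l * S (b :: bs) l := by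
    refine Finset.sum_congr rfl fun l hl => ?_
    rw [show S (b :: bs) l = ∑ k ∈ Finset.Icc 1 l, (1 / (k : ℝ) ^ b) * S bs k from rfl]
  have e2 : (∑ l ∈ Finset.Icc 1 N, (∑ k ∈ Finset.Icc 1 l,
      (fun l : ℕ => (1 / (l : ℝ) ^ a) * S as l) k) * ((fun l : ℕ => (1 / (l : ℝ) ^ b) * S bs l) l))
      = ∑ l ∈ Finset.Icc 1 N, (1 / (l : ℝ) ^ b) * S (a :: as) l * S bs l := by
    refine Finset.sum_congr rfl fun l hl => ?_
    rw [show S (a :: as) l = ∑ k ∈ Finset.Icc 1 l, (1 / (k : ℝ) ^ a) * S as k from rfl]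
    ring
  have e3 : (∑ l ∈ Finset.Icc 1 N, (fun l : ℕ => (1 / (l : ℝ) ^ a) * S as l) l
      * ((fun l : ℕ => (1 / (l : ℝ) ^ b) * S bs l) l))
      = ∑ l ∈ Finset.Icc 1 N, (1 / (l : ℝ) ^ (a + b)) * S as l * S bs l := by
    refine Finset.sum_congr rfl fun l hl => ?_
    have hl1 : 1 ≤ l := (Finset.mem_Icc.mp hl).1
    have hl0 : (l : ℝ) ≠ 0 := by positivity
    simp only [pow_add]
    field_simp
  rw [e1, e2, e3] at h
  exact h
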